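/- Let a_i = 2^{−i} · ∏_{j=i+1}^{∞} (1 − 2^{−j}) for each natural number i ≥ 0, where the infinite product is the convergent product over all integers j ≥ i+1. Then ∑_{i=0}^{∞} a_i = 1. -/

import Mathlib

open Real Filter Finset

/-- `a i = 2^{−i} · ∏_{j=i+1}^{∞} (1 − 2^{−j})`, the infinite product taken over all
integers `j ≥ i + 1` (indexed by `j ↦ j + i + 1` over `ℕ`). -/
noncomputable def a (i : ℕ) : ℝ :=
  (2 : ℝ) ^ (-(i : ℤ)) * ∏' j : ℕ, (1 - (2 : ℝ) ^ (-((j : ℤ) + (i : ℤ) + 1)))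

namespace TsumAAux

noncomputable def pf (n : ℕ) (j : ℕ) : ℝ := 1 - (2 : ℝ) ^ (-((j : ℤ) + (n : ℤ) + 1))

noncomputable def P (n : ℕ) : ℝ := ∏' j : ℕ, pf n j

lemma x_pos (n j : ℕ) : 0 < (2 : ℝ) ^ (-((j : ℤ) + (n : ℤ) + 1)) :=
  zpow_pos (by norm_num) _

lemma x_le (n j : ℕ) : (2 : ℝ) ^ (-((j : ℤ) + (n : ℤ) + 1)) ≤ (1 / 2) * (1 / 2) ^ j := by
  have h1 : (-((j : ℤ) + (n : ℤ) + 1)) = -(((j + n + 1 : ℕ) : ℤ)) := by push_cast; ring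
  rw [h1, zpow_neg, zpow_natCast]
  rw [show (1:ℝ)/2 * (1/2)^j = ((2:ℝ) ^ (j+1))⁻¹ by
    rw [pow_succ, one_div, inv_pow, mul_inv]; ring]
  apply inv_anti₀ (by positivity)
  apply pow_le_pow_right₀ (by norm_num)
  omega

lemma pf_pos (n j : ℕ) : 0 < pf n j := by
  have := x_le n j
  have : (2 : ℝ) ^ (-((j : ℤ) + (n : ℤ) + 1)) ≤ 1/2 := by
    refine this.trans ?_
    have : ((1:ℝ)/2)^j ≤ 1 := pow_le_one₀ (by norm_num) (by norm_num)
    nlinarith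
  unfold pf; linarith

lemma summable_log (n : ℕ) : Summable (fun j : ℕ => Real.log (pf n j)) := by
  apply Summable.of_norm_bounded (g := fun j => (1/2 : ℝ) ^ j)
    (summable_geometric_of_lt_one (by norm_num) (by norm_num))
  intro j
  set x := (2 : ℝ) ^ (-((j : ℤ) + (n : ℤ) + 1)) with hx
  have hx0 : 0 < x := x_pos n j
  have hxle : x ≤ (1/2) * (1/2) ^ j := x_le n j
  have hgle : ((1:ℝ)/2)^j ≤ 1 := pow_le_one₀ (by norm_num) (by norm_num)
  have hxhalf : x ≤ 1/2 := by nlinarith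
  have hpos : 0 < 1 - x := by linarith
  have hlog : Real.log (pf n j) ≤ 0 := Real.log_nonpos (by unfold pf; rw [← hx]; linarith)
    (by unfold pf; rw [← hx]; linarith)
  rw [Real.norm_eq_abs, abs_of_nonpos hlog]
  have : -Real.log (pf n j) = Real.log (1 - x)⁻¹ := by
    unfold pf; rw [← hx, Real.log_inv]
  rw [this]
  have h2 := Real.log_le_sub_one_of_pos (inv_pos.mpr hpos)
  have h3 : (1 - x) * (1 - x)⁻¹ = 1 := mul_inv_cancel₀ (ne_of_gt hpos)
  have h4 : (1 - x)⁻¹ - 1 ≤ 2 * x := by nlinarith [inv_pos.mpr hpos]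
  have hgeo : (0:ℝ) < (1/2)^j := by positivity
  nlinarith

lemma hasProd_P (n : ℕ) :
    HasProd (pf n) (Real.exp (∑' j : ℕ, Real.log (pf n j))) := by
  have h := (summable_log n).hasSum.rexp
  have he : (rexp ∘ fun j => Real.log (pf n j)) = pf n :=
    funext fun j => Real.exp_log (pf_pos n j)
  rwa [he] at h

lemma multipliable_P (n : ℕ) : Multipliable (pf n) := ⟨_, hasProd_P n⟩

lemma P_pos (n : ℕ) : 0 < P n := by
  rw [P, (hasProd_P n).tprod_eq]; exact Real.exp_pos _

lemma P_le_one (n : ℕ) : P n ≤ 1 := by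
  rw [P, (hasProd_P n).tprod_eq]
  rw [show (1:ℝ) = Real.exp 0 by simp]
  apply Real.exp_le_exp.mpr
  apply tsum_nonpos
  intro j
  have := pf_pos n j
  exact Real.log_nonpos (le_of_lt this) (by unfold pf; have := x_pos n j; linarith)

lemma pf_succ (n j : ℕ) : pf n (j + 1) = pf (n + 1) j := by
  unfold pf
  rw [show (-(((j:ℕ)+1 : ℕ) + (n:ℤ) + 1)) = -((j : ℤ) + ((n:ℕ)+1 : ℕ) + 1) by push_cast; ring]

lemma pf_add (k j : ℕ) : pf 0 (j + k) = pf k j := by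
  unfold pf
  rw [show (-(((j + k : ℕ) : ℤ) + ((0:ℕ) : ℤ) + 1)) = -((j : ℤ) + (k : ℤ) + 1) by push_cast; ring]

lemma P_rec (n : ℕ) : P n = (1 - (2:ℝ) ^ (-((n:ℤ) + 1))) * P (n + 1) := by
  have hm : Multipliable fun j : ℕ => pf n (j + 1) :=
    (multipliable_P (n + 1)).congr fun j => (pf_succ n j).symm
  rw [P, tprod_eq_zero_mul' hm]
  congr 1
  · unfold pf; norm_num
  · rw [P]
    exact tprod_congr (pf_succ n)

lemma a_eq (i : ℕ) : a i = (2 : ℝ) ^ (-(i : ℤ)) * P i := rfl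

lemma sum_range_a (n : ℕ) : ∑ i ∈ range (n + 1), a i = P n := by
  induction n with
  | zero =>
    simp [a_eq, P_rec 0]
  | succ n ih =>
    rw [Finset.sum_range_succ, ih, a_eq, P_rec n]
    have : ((2:ℝ)) ^ (-((n:ℤ) + 1)) = (2:ℝ) ^ (-((n+1 : ℕ) : ℤ)) := by push_cast; ring_nf
    rw [this]
    ring

lemma tendsto_P : Tendsto P atTop (nhds 1) := by
  have hmul := multipliable_P 0
  have htp : Tendsto (fun k => ∏ i ∈ range k, pf 0 i) atTop (nhds (P 0)) :=
    (multipliable_P 0).hasProd.tendsto_prod_nat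
  have hPk : ∀ k, (∏ i ∈ range k, pf 0 i) * P k = P 0 := by
    intro k
    have hm : Multipliable fun j : ℕ => pf 0 (j + k) :=
      (multipliable_P k).congr fun j => (pf_add k j).symm
    simp only [P]
    rw [← hm.prod_mul_tprod_nat_mul']
    congr 1
  have hprod_pos : ∀ k, (0:ℝ) < ∏ i ∈ range k, pf 0 i :=
    fun k => Finset.prod_pos fun i _ => pf_pos 0 i
  have hP0 : P 0 ≠ 0 := ne_of_gt (P_pos 0)
  have : Tendsto (fun k => P 0 * (∏ i ∈ range k, pf 0 i)⁻¹) atTop (nhds (P 0 * (P 0)⁻¹)) :=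
    tendsto_const_nhds.mul (htp.inv₀ hP0)
  rw [mul_inv_cancel₀ hP0] at this
  refine this.congr fun k => ?_
  rw [← hPk k, mul_comm (∏ i ∈ range k, pf 0 i) (P k), mul_assoc,
      mul_inv_cancel₀ (ne_of_gt (hprod_pos k)), mul_one]

end TsumAAux

open TsumAAux in
/-- `∑_{i=0}^{∞} a_i = 1`. -/
theorem tsum_a_eq_one : ∑' i : ℕ, a i = 1 := by
  have hnn : ∀ i, 0 ≤ a i := fun i => by
    rw [a_eq]
    exact mul_nonneg (le_of_lt (zpow_pos (by norm_num) _)) (le_of_lt (P_pos i))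
  have hbound : ∀ n, ∑ i ∈ range n, a i ≤ 1 := by
    intro n
    cases n with
    | zero => simp
    | succ n => rw [sum_range_a n]; exact P_le_one n
  have hsum : Summable a := summable_of_sum_range_le hnn hbound
  have h1 : Tendsto (fun n => ∑ i ∈ range n, a i) atTop (nhds (∑' i, a i)) :=
    hsum.hasSum.tendsto_sum_nat
  have h2 : Tendsto (fun n => ∑ i ∈ range n, a i) atTop (nhds 1) := by
    rw [← tendsto_add_atTop_iff_nat 1]
    exact tendsto_P.congr fun n => (sum_range_a n).symm
  exact tendsto_nhds_unique h1 h2
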